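/- Let s ≥ 1 be an integer, q = 2^s, m ≥ 2 an even integer, and n = q^m − 1. Then the code C_{(q,m;1)} is a linear complementary dual (LCD) code, i.e. C_{(q,m;1)} ∩ C_{(q,m;1)}^⊥ = {0}, and its dimension as an F-vector space is (n−1)/2. -/

import Mathlib

open Finset

/-- The `q`-weight of a nonnegative integer: the sum of its base-`q` digits. -/
def qWeight (q i : ℕ) : ℕ := (Nat.digits q i).sum

/-- The set `T_{(q,m;j)} = {i : 1 ≤ i ≤ q^m − 2, wt_q(i) ≡ j (mod 2)}`. -/
def Tset (q m j : ℕ) : Set ℕ :=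
  {i | 1 ≤ i ∧ i ≤ q ^ m - 2 ∧ qWeight q i % 2 = j}

/-- The cyclic code of length `n` over `F` with defining set `T` with respect to `β ∈ E`:
all words `(c_0, …, c_{n-1})` with `∑_j c_j β^{k j} = 0` for every `k ∈ T`. -/
def cyclicCode (F E : Type*) [Field F] [Field E] [Algebra F E]
    (n : ℕ) (β : E) (T : Set ℕ) : Submodule F (Fin n → F) where
  carrier := {c | ∀ k ∈ T, ∑ j : Fin n, algebraMap F E (c j) * β ^ (k * (j : ℕ)) = 0}
  add_mem' := by
    intro a b ha hb k hk
    simp only [Set.mem_setOf_eq, Pi.add_apply, map_add, add_mul] at *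
    rw [Finset.sum_add_distrib, ha k hk, hb k hk, add_zero]
  zero_mem' := by
    intro k hk
    simp
  smul_mem' := by
    intro r c hc k hk
    simp only [Set.mem_setOf_eq, Pi.smul_apply, smul_eq_mul, map_mul, mul_assoc] at *
    rw [← Finset.mul_sum, hc k hk, mul_zero]

/-- The minimum distance of a code: the least Hamming weight of a nonzero codeword. -/
noncomputable def minDist {F : Type*} [Field F] [DecidableEq F] {n : ℕ}
    (C : Submodule F (Fin n → F)) : ℕ :=
  sInf {w | ∃ c ∈ C, c ≠ 0 ∧ hammingNorm c = w}

/-- The dual of a set of words: all words orthogonal (for the standard bilinear form)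
to every word of the set. -/
def dualSet {F : Type*} [Field F] {N : ℕ} (C : Set (Fin N → F)) : Set (Fin N → F) :=
  {u | ∀ v ∈ C, ∑ k : Fin N, u k * v k = 0}


section AuxLemmas
open Polynomial


lemma qWeight_def (q : ℕ) (hq : 2 ≤ q) (i : ℕ) :
    qWeight q i = i % q + qWeight q (i / q) := by
  rcases Nat.eq_zero_or_pos i with h | h
  · simp [h, qWeight]
  · unfold qWeight
    rw [Nat.digits_def' hq h]
    simp

lemma qWeight_zero (q : ℕ) : qWeight q 0 = 0 := by simp [qWeight]

lemma qWeight_lt (q : ℕ) (hq : 2 ≤ q) (x : ℕ) (hx : x < q) : qWeight q x = x := by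
  rw [qWeight_def q hq, Nat.mod_eq_of_lt hx, Nat.div_eq_of_lt hx, qWeight_zero]; omega

lemma qWeight_add_pow_mul (q : ℕ) (hq : 2 ≤ q) (j : ℕ) :
    ∀ x y : ℕ, x < q ^ j → qWeight q (x + q ^ j * y) = qWeight q x + qWeight q y := by
  induction j with
  | zero =>
    intro x y hx
    have : x = 0 := by simpa using hx
    simp [this, qWeight_zero]
  | succ j ih =>
    intro x y hx
    have hq0 : 0 < q := by omega
    have h1 : (x + q ^ (j+1) * y) % q = x % q := by
      have : q ^ (j+1) * y = q * (q ^ j * y) := by ring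
      rw [this, Nat.add_mul_mod_self_left]
    have h2 : (x + q ^ (j+1) * y) / q = x / q + q ^ j * y := by
      have : x + q ^ (j+1) * y = x + q * (q ^ j * y) := by ring
      rw [this, Nat.add_mul_div_left _ _ hq0]
    rw [qWeight_def q hq, h1, h2, ih (x / q) y (by
      apply Nat.div_lt_of_lt_mul
      rw [pow_succ] at hx
      calc x < q ^ j * q := hx
        _ = q * q ^ j := by ring), qWeight_def q hq x]
    ring

lemma qWeight_le (q : ℕ) (hq : 2 ≤ q) (j : ℕ) :
    ∀ k : ℕ, k < q ^ j → qWeight q k ≤ j * (q - 1) := by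
  induction j with
  | zero =>
    intro k hk
    have : k = 0 := by simpa using hk
    simp [this, qWeight_zero]
  | succ j ih =>
    intro k hk
    have hq0 : 0 < q := by omega
    rw [qWeight_def q hq]
    have h1 : k % q ≤ q - 1 := by have := Nat.mod_lt k hq0; omega
    have h2 : qWeight q (k / q) ≤ j * (q - 1) := by
      apply ih
      apply Nat.div_lt_of_lt_mul
      calc k < q ^ (j+1) := hk
        _ = q * q ^ j := by ring
    calc k % q + qWeight q (k / q) ≤ (q - 1) + j * (q-1) := by omega
      _ = (j+1) * (q-1) := by ring

lemma qWeight_compl (q : ℕ) (hq : 2 ≤ q) (j : ℕ) :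
    ∀ k : ℕ, k < q ^ j → qWeight q (q ^ j - 1 - k) = j * (q - 1) - qWeight q k := by
  induction j with
  | zero =>
    intro k hk
    have : k = 0 := by simpa using hk
    simp [this, qWeight_zero]
  | succ j ih =>
    intro k hk
    have hq0 : 0 < q := by omega
    have hqj : 0 < q ^ j := Nat.pow_pos hq0
    have hq1 : q ^ 1 = q := pow_one q
    have hrq : k % q < q := Nat.mod_lt k hq0
    have hkdec : k = k % q + q ^ 1 * (k / q) := by
      rw [hq1]; have := Nat.div_add_mod k q; omega
    have htj : k / q < q ^ j := by
      apply Nat.div_lt_of_lt_mul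
      calc k < q ^ (j+1) := hk
        _ = q * q ^ j := by ring
    have e1 : q ^ (j+1) = q * q ^ j := by ring
    have e3 : q * (q ^ j - 1 - k / q) = q * q ^ j - q * 1 - q * (k / q) := by
      rw [Nat.mul_sub, Nat.mul_sub]
    have e4 : q * (k / q + 1) ≤ q * q ^ j := Nat.mul_le_mul_left q (by omega)
    have e5 : q * (k / q + 1) = q * (k / q) + q := by ring
    have e6 := Nat.div_add_mod k q
    have hdec : q ^ (j+1) - 1 - k = (q - 1 - k % q) + q ^ 1 * (q ^ j - 1 - k / q) := by
      rw [hq1, e3]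
      have := Nat.div_add_mod k q
      omega
    rw [hdec, qWeight_add_pow_mul q hq 1 (q - 1 - k % q) _ (by rw [hq1]; omega),
      qWeight_lt q hq _ (by omega), ih (k / q) htj]
    conv_rhs => rw [hkdec, qWeight_add_pow_mul q hq 1 (k % q) (k / q) (by rw [hq1]; exact hrq),
      qWeight_lt q hq (k % q) hrq]
    have hwt : qWeight q (k / q) ≤ j * (q-1) := qWeight_le q hq j (k / q) htj
    have : (j+1) * (q-1) = (q-1) + j * (q-1) := by ring
    omega

lemma rotate_lemma (q m n : ℕ) (hq : 2 ≤ q) (hm : 1 ≤ m) (hn : n = q ^ m - 1) (k : ℕ)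
    (hk1 : 1 ≤ k) (hk2 : k < n) :
    qWeight q ((q * k) % n) = qWeight q k ∧ 1 ≤ (q * k) % n ∧ (q * k) % n < n := by
  have hq0 : 0 < q := by omega
  have hp : 0 < q ^ (m-1) := Nat.pow_pos hq0
  have hqm : q ^ m = q ^ (m-1) * q := by rw [← pow_succ]; congr 1; omega
  have h1qm : 1 ≤ q ^ m := Nat.one_le_pow _ _ hq0
  obtain ⟨a, b, hdm, hblt⟩ : ∃ a b, k = q ^ (m-1) * a + b ∧ b < q ^ (m-1) :=
    ⟨k / q ^ (m-1), k % q ^ (m-1), by have := Nat.div_add_mod k (q^(m-1)); omega, Nat.mod_lt k hp⟩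
  have halt : a < q := by
    by_contra h
    push_neg at h
    have h2 : q ^ (m-1) * q ≤ q ^ (m-1) * a := Nat.mul_le_mul_left _ h
    omega
  have hqb : q * b + q ≤ q ^ m := by
    have h3 : q * (b + 1) ≤ q * q ^ (m-1) := Nat.mul_le_mul_left q hblt
    have h4 : q * (b + 1) = q * b + q := by ring
    have h5 : q * q ^ (m-1) = q ^ m := by rw [hqm]; ring
    omega
  have hqk : q * k = (a + q * b) + a * n := by
    have e1 : q * k = q * b + q ^ m * a := by
      calc q * k = q * (q ^ (m-1) * a + b) := by rw [← hdm]
        _ = q * b + (q ^ (m-1) * q) * a := by ring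
        _ = q * b + q ^ m * a := by rw [← hqm]
    have e2 : q ^ m * a = a * n + a := by
      rw [hn, Nat.mul_sub]
      have h6 : a * 1 ≤ a * q ^ m := Nat.mul_le_mul_left a h1qm
      have h7 : a * q ^ m = q ^ m * a := by ring
      omega
    omega
  have hab : a + q * b < n := by
    rcases Nat.lt_or_ge (a + q * b) n with h | h
    · exact h
    exfalso
    have heq : a + q * b = n := by omega
    have ha' : a = q - 1 := by omega
    have hqb' : q * b = q ^ m - q := by omega
    have hb' : b = q ^ (m-1) - 1 := by
      have h7 : q * (q ^ (m-1) - 1) = q ^ m - q := by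
        rw [Nat.mul_sub, hqm]; ring_nf
      apply Nat.eq_of_mul_eq_mul_left hq0
      omega
    have h8 : q ^ (m-1) * a = q ^ m - q ^ (m-1) := by
      rw [ha', Nat.mul_sub, hqm]; ring_nf
    have h9 : q ^ (m-1) ≤ q ^ m := by
      have := Nat.mul_le_mul_left (q ^ (m-1)) hq
      omega
    omega
  have hmod : (q * k) % n = a + q * b := by
    rw [hqk, Nat.add_mul_mod_self_right, Nat.mod_eq_of_lt hab]
  have hq1 : q ^ 1 = q := pow_one q
  have w1 : qWeight q (a + q * b) = a + qWeight q b := by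
    rw [show a + q * b = a + q ^ 1 * b by rw [hq1],
      qWeight_add_pow_mul q hq 1 a b (by rw [hq1]; exact halt),
      qWeight_lt q hq a halt]
  have w2 : qWeight q k = qWeight q b + a := by
    rw [show k = b + q ^ (m-1) * a by omega,
      qWeight_add_pow_mul q hq (m-1) b a hblt, qWeight_lt q hq a halt]
  have hpos : 1 ≤ a + q * b := by
    by_contra h
    push_neg at h
    have ha0 : a = 0 := by omega
    have hb0 : b = 0 := by
      have : q * b = 0 := by omega
      rcases Nat.mul_eq_zero.mp this with h' | h' <;> omega
    rw [ha0, hb0, Nat.mul_zero] at hdm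
    omega
  rw [hmod]
  exact ⟨by omega, hpos, hab⟩

lemma qWeight_succ_of_even (q i : ℕ) (hq : 2 ≤ q) (hqe : 2 ∣ q) (hi : i % 2 = 0) :
    qWeight q (i + 1) = qWeight q i + 1 := by
  have hq0 : 0 < q := by omega
  have hdm := Nat.div_add_mod i q
  have hd2 : 2 ∣ q * (i / q) := Dvd.dvd.mul_right hqe _
  have hmq : i % q < q := Nat.mod_lt i hq0
  have hlt : i % q + 1 < q := by omega
  have e : i + 1 = (i % q + 1) + q * (i / q) := by omega
  rw [qWeight_def q hq (i+1), qWeight_def q hq i, e, Nat.add_mul_mod_self_left,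
    Nat.add_mul_div_left _ _ hq0, Nat.mod_eq_of_lt hlt, Nat.div_eq_of_lt hlt, Nat.zero_add]
  omega

lemma card_odd_weight (q : ℕ) (hq : 2 ≤ q) (hqe : 2 ∣ q) (B : ℕ) (hB : 2 ∣ B) :
    ((Finset.range B).filter (fun i => qWeight q i % 2 = 1)).card = B / 2 := by
  classical
  set A := (Finset.range B).filter (fun i => qWeight q i % 2 = 1) with hA
  set A' := (Finset.range B).filter (fun i => ¬ (qWeight q i % 2 = 1)) with hA'
  have hsum : A.card + A'.card = B := by
    rw [hA, hA', Finset.card_filter_add_card_filter_not]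
    · exact Finset.card_range B
  have hcard : A.card = A'.card := by
    apply Finset.card_nbij' (fun i => if i % 2 = 0 then i + 1 else i - 1)
      (fun i => if i % 2 = 0 then i + 1 else i - 1)
    · intro a ha
      rw [hA, Finset.mem_coe, Finset.mem_filter, Finset.mem_range] at ha
      rw [hA', Finset.mem_coe, Finset.mem_filter, Finset.mem_range]
      rcases Nat.even_or_odd a with h | h
      · have h0 : a % 2 = 0 := Nat.even_iff.mp h
        have hw := qWeight_succ_of_even q a hq hqe h0
        simp only [h0, if_true]
        constructor
        · omega
        · omega
      · have h1 : a % 2 = 1 := Nat.odd_iff.mp h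
        have ha1 : 1 ≤ a := by omega
        have hw := qWeight_succ_of_even q (a - 1) hq hqe (by omega)
        rw [Nat.sub_add_cancel ha1] at hw
        simp only [show ¬ (a % 2 = 0) by omega, if_false]
        constructor
        · omega
        · omega
    · intro a ha
      rw [hA', Finset.mem_coe, Finset.mem_filter, Finset.mem_range] at ha
      rw [hA, Finset.mem_coe, Finset.mem_filter, Finset.mem_range]
      rcases Nat.even_or_odd a with h | h
      · have h0 : a % 2 = 0 := Nat.even_iff.mp h
        have hw := qWeight_succ_of_even q a hq hqe h0
        simp only [h0, if_true]
        constructor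
        · omega
        · omega
      · have h1 : a % 2 = 1 := Nat.odd_iff.mp h
        have ha1 : 1 ≤ a := by omega
        have hw := qWeight_succ_of_even q (a - 1) hq hqe (by omega)
        rw [Nat.sub_add_cancel ha1] at hw
        simp only [show ¬ (a % 2 = 0) by omega, if_false]
        constructor
        · omega
        · omega
    · intro a ha
      rcases Nat.even_or_odd a with h | h
      · have h0 : a % 2 = 0 := Nat.even_iff.mp h
        simp only [h0, if_true, show ¬ ((a+1) % 2 = 0) by omega, if_false]
        omega
      · have h1 : a % 2 = 1 := Nat.odd_iff.mp h
        rw [hA, Finset.mem_coe, Finset.mem_filter] at ha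
        have ha1 : 1 ≤ a := by omega
        simp only [show ¬ (a % 2 = 0) by omega, if_false, show (a-1) % 2 = 0 by omega, if_true]
        omega
    · intro a ha
      rcases Nat.even_or_odd a with h | h
      · have h0 : a % 2 = 0 := Nat.even_iff.mp h
        simp only [h0, if_true, show ¬ ((a+1) % 2 = 0) by omega, if_false]
        omega
      · have h1 : a % 2 = 1 := Nat.odd_iff.mp h
        have ha1 : 1 ≤ a := by omega
        simp only [show ¬ (a % 2 = 0) by omega, if_false, show (a-1) % 2 = 0 by omega, if_true]
        omega
  omega


noncomputable def polyOf {F : Type*} [Semiring F] {n : ℕ} (c : Fin n → F) : F[X] :=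
  ∑ j : Fin n, C (c j) * X ^ (j : ℕ)

lemma polyOf_coeff {F : Type*} [Semiring F] {n : ℕ} (c : Fin n → F) (i : ℕ) :
    (polyOf c).coeff i = if h : i < n then c ⟨i, h⟩ else 0 := by
  classical
  rw [polyOf, Polynomial.finset_sum_coeff]
  simp only [Polynomial.coeff_C_mul, Polynomial.coeff_X_pow, mul_ite, mul_one, mul_zero]
  split
  · next h =>
    rw [Finset.sum_eq_single (⟨i, h⟩ : Fin n)]
    · simp
    · intro b _ hb
      rw [if_neg]
      intro he
      exact hb (Fin.val_injective (he.symm : (b : ℕ) = ((⟨i, h⟩ : Fin n) : ℕ)))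
    · simp
  · next h =>
    apply Finset.sum_eq_zero
    intro b _
    rw [if_neg]
    intro he
    exact h (he ▸ b.isLt)

lemma polyOf_natDegree_lt {F : Type*} [Semiring F] {n : ℕ} (hn : 0 < n) (c : Fin n → F) :
    (polyOf c).natDegree < n := by
  by_cases h0 : polyOf c = 0
  · simp [h0, hn]
  by_contra h
  push_neg at h
  have hc := polyOf_coeff c (polyOf c).natDegree
  rw [dif_neg (by omega)] at hc
  exact h0 (Polynomial.leadingCoeff_eq_zero.mp hc)

lemma polyOf_eval {F E : Type*} [CommSemiring F] [CommSemiring E] (f : F →+* E) {n : ℕ}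
    (c : Fin n → F) (x : E) :
    ((polyOf c).map f).eval x = ∑ j : Fin n, f (c j) * x ^ (j : ℕ) := by
  rw [polyOf, Polynomial.map_sum, Polynomial.eval_finset_sum]
  apply Finset.sum_congr rfl
  intro j _
  simp

lemma polyOf_eq_of_coeff {F : Type*} [Semiring F] {n : ℕ} (p : F[X]) (hp : p.natDegree < n) :
    polyOf (fun j : Fin n => p.coeff (j : ℕ)) = p := by
  apply Polynomial.ext
  intro i
  rw [polyOf_coeff]
  split
  · rfl
  · next h =>
    exact (Polynomial.coeff_eq_zero_of_natDegree_lt (by omega)).symm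

section
variable {F E : Type*} [Field F] [Field E] [Algebra F E]

lemma polyOf_eq_zero_iff {n : ℕ} (c : Fin n → F) : polyOf c = 0 ↔ c = 0 := by
  constructor
  · intro h
    funext j
    have hc := polyOf_coeff c (j : ℕ)
    rw [dif_pos j.isLt, Fin.eta, h] at hc
    simpa using hc.symm
  · intro h
    rw [h, polyOf]
    simp

lemma polyOf_add {n : ℕ} (a b : Fin n → F) : polyOf (a + b) = polyOf a + polyOf b := by
  rw [polyOf, polyOf, polyOf, ← Finset.sum_add_distrib]
  apply Finset.sum_congr rfl
  intro j _
  simp [add_mul]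

lemma polyOf_smul {n : ℕ} (r : F) (a : Fin n → F) : polyOf (r • a) = C r * polyOf a := by
  rw [polyOf, polyOf, Finset.mul_sum]
  apply Finset.sum_congr rfl
  intro j _
  simp [mul_assoc]

lemma pow_inj_of_orderOf {n : ℕ} (hn : 0 < n) (β : E) (hβ : orderOf β = n) {k k' : ℕ}
    (hk : k < n) (hk' : k' < n) (h : β ^ k = β ^ k') : k = k' := by
  have hβ1 : β ^ n = 1 := hβ ▸ pow_orderOf_eq_one β
  have hβ0 : β ≠ 0 := by
    rintro rfl
    rw [zero_pow hn.ne'] at hβ1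
    exact zero_ne_one hβ1
  have key : ∀ a b : ℕ, a ≤ b → b < n → β ^ a = β ^ b → a = b := by
    intro a b hab hbn hpow
    have h1 : β ^ a * β ^ (b - a) = β ^ a * 1 := by
      rw [mul_one, ← pow_add]
      rw [show a + (b - a) = b by omega]
      exact hpow.symm
    have h2 : β ^ (b - a) = 1 := mul_left_cancel₀ (pow_ne_zero a hβ0) h1
    have h3 : n ∣ (b - a) := hβ ▸ orderOf_dvd_iff_pow_eq_one.mpr h2
    have h4 : b - a < n := by omega
    have h5 : b - a = 0 := by
      rcases h3 with ⟨t, ht⟩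
      rcases Nat.eq_zero_or_pos t with rfl | hT
      · omega
      · have : n * 1 ≤ n * t := Nat.mul_le_mul_left n hT
        omega
    omega
  rcases le_total k k' with hle | hle
  · exact key k k' hle hk' h
  · exact (key k' k hle hk h.symm).symm

lemma dvd_of_roots {E : Type*} [Field E] (S : Finset ℕ) (f : ℕ → E)
    (hinj : Set.InjOn f S) (p : E[X]) (hroot : ∀ k ∈ S, p.eval (f k) = 0) :
    (∏ k ∈ S, (X - C (f k))) ∣ p := by
  by_cases hp : p = 0
  · simp [hp]
  have hnodup : (S.val.map f).Nodup := S.nodup.map_on (by intro x hx y hy; exact hinj hx hy)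
  have hle : (S.val.map f) ≤ p.roots := by
    rw [Multiset.le_iff_subset hnodup]
    intro a ha
    rw [Multiset.mem_map] at ha
    obtain ⟨k, hk, rfl⟩ := ha
    rw [Polynomial.mem_roots hp]
    exact hroot k hk
  have h2 := (Multiset.prod_X_sub_C_dvd_iff_le_roots hp (S.val.map f)).mpr hle
  rw [Multiset.map_map] at h2
  rw [Finset.prod_eq_multiset_prod]
  convert h2 using 3
  rfl

lemma mem_cyclicCode_iff_dvd (n : ℕ) (hn : 0 < n) (β : E) (hβ : orderOf β = n)
    (S : Finset ℕ) (hS : ∀ k ∈ S, k < n) (g : F[X]) (hmonic : g.Monic)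
    (hg : g.map (algebraMap F E) = ∏ k ∈ S, (X - C (β ^ k))) (c : Fin n → F) :
    c ∈ cyclicCode F E n β ↑S ↔ g ∣ polyOf c := by
  have hmem : c ∈ cyclicCode F E n β ↑S ↔
      ∀ k ∈ S, ((polyOf c).map (algebraMap F E)).eval (β ^ k) = 0 := by
    constructor
    · intro h k hk
      rw [polyOf_eval]
      rw [show (∑ j : Fin n, algebraMap F E (c j) * (β ^ k) ^ (j:ℕ)) =
          ∑ j : Fin n, algebraMap F E (c j) * β ^ (k * (j:ℕ)) from
        Finset.sum_congr rfl (fun j _ => by rw [← pow_mul])]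
      exact h k (by simpa using hk)
    · intro h k hk
      simp only [Finset.mem_coe] at hk
      have := h k hk
      rw [polyOf_eval] at this
      rw [show (∑ j : Fin n, algebraMap F E (c j) * β ^ (k * (j:ℕ))) =
          ∑ j : Fin n, algebraMap F E (c j) * (β ^ k) ^ (j:ℕ) from
        Finset.sum_congr rfl (fun j _ => by rw [← pow_mul])]
      exact this
  rw [hmem]
  constructor
  · intro h
    rw [← Polynomial.map_dvd_map (algebraMap F E) (algebraMap F E).injective hmonic, hg]
    exact dvd_of_roots S (fun k => β ^ k)
      (fun x hx y hy hxy => pow_inj_of_orderOf hn β hβ (hS x hx) (hS y hy) hxy) _ h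
  · intro h k hk
    have hdvd : (X - C (β ^ k)) ∣ (polyOf c).map (algebraMap F E) := by
      refine dvd_trans ?_ (Polynomial.map_dvd (algebraMap F E) h)
      rw [hg]
      exact Finset.dvd_prod_of_mem _ hk
    obtain ⟨t, ht⟩ := hdvd
    rw [ht]
    simp

end

section
variable {F E : Type*} [Field F] [Field E] [Algebra F E]

lemma cyclicCode_finrank (n : ℕ) (hn : 0 < n) (β : E) (hβ : orderOf β = n)
    (S : Finset ℕ) (hS : ∀ k ∈ S, k < n) (g : F[X]) (hmonic : g.Monic)
    (hdeg : g.natDegree = S.card) (hcard : S.card ≤ n)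
    (hg : g.map (algebraMap F E) = ∏ k ∈ S, (X - C (β ^ k))) :
    Module.finrank F (cyclicCode F E n β ↑S) = n - S.card := by
  classical
  have hg0 : g ≠ 0 := hmonic.ne_zero
  set d := S.card with hd
  let Ψ : (Fin (n - d) → F) →ₗ[F] (Fin n → F) :=
    { toFun := fun h => fun j => (g * polyOf h).coeff (j : ℕ)
      map_add' := by
        intro a b
        funext j
        simp [polyOf_add, mul_add]
      map_smul' := by
        intro r a
        funext j
        simp only [polyOf_smul, RingHom.id_apply, Pi.smul_apply, smul_eq_mul]
        rw [mul_left_comm, Polynomial.coeff_C_mul] }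
  have hdeglt : ∀ h : Fin (n - d) → F, (g * polyOf h).natDegree < n := by
    intro h
    by_cases h0 : polyOf h = 0
    · simp [h0, hn]
    rw [Polynomial.natDegree_mul hg0 h0]
    have h2 : (polyOf h).natDegree < n - d := by
      rcases Nat.eq_zero_or_pos (n - d) with h' | h'
      · exfalso
        apply h0
        rw [polyOf, Finset.sum_eq_zero]
        intro j _
        have := j.isLt
        omega
      · exact polyOf_natDegree_lt h' h
    omega
  have hinj : Function.Injective Ψ := by
    rw [← LinearMap.ker_eq_bot, LinearMap.ker_eq_bot']
    intro h hh
    have hcoeff : ∀ i : ℕ, (g * polyOf h).coeff i = 0 := by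
      intro i
      by_cases hi : i < n
      · have := congrFun hh ⟨i, hi⟩
        exact this
      · exact Polynomial.coeff_eq_zero_of_natDegree_lt (by have := hdeglt h; omega)
    have hzero : g * polyOf h = 0 := Polynomial.ext (by simpa using hcoeff)
    rcases mul_eq_zero.mp hzero with h' | h'
    · exact absurd h' hg0
    · exact (polyOf_eq_zero_iff h).mp h'
  have hrange : LinearMap.range Ψ = cyclicCode F E n β ↑S := by
    apply le_antisymm
    · rintro c ⟨h, rfl⟩
      rw [mem_cyclicCode_iff_dvd n hn β hβ S hS g hmonic hg]
      have : polyOf (fun j : Fin n => (g * polyOf h).coeff (j : ℕ)) = g * polyOf h :=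
        polyOf_eq_of_coeff _ (hdeglt h)
      rw [show (Ψ h : Fin n → F) = fun j : Fin n => (g * polyOf h).coeff (j : ℕ) from rfl]
      rw [this]
      exact Dvd.intro _ rfl
    · intro c hc
      rw [mem_cyclicCode_iff_dvd n hn β hβ S hS g hmonic hg] at hc
      obtain ⟨h0, hh0⟩ := hc
      by_cases hc0 : polyOf c = 0
      · have : c = 0 := (polyOf_eq_zero_iff c).mp hc0
        rw [this]
        exact Submodule.zero_mem _
      have hh00 : h0 ≠ 0 := by
        rintro rfl
        rw [mul_zero] at hh0
        exact hc0 hh0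
      have hdegh0 : h0.natDegree < n - d := by
        have h1 : (polyOf c).natDegree < n := polyOf_natDegree_lt hn c
        rw [hh0, Polynomial.natDegree_mul hg0 hh00] at h1
        omega
      refine ⟨fun j : Fin (n - d) => h0.coeff (j : ℕ), ?_⟩
      funext j
      show (g * polyOf fun j : Fin (n-d) => h0.coeff (j : ℕ)).coeff (j : ℕ) = c j
      rw [polyOf_eq_of_coeff h0 hdegh0, ← hh0]
      have := polyOf_coeff c (j : ℕ)
      rw [dif_pos j.isLt, Fin.eta] at this
      exact this
  have := LinearMap.finrank_range_of_inj hinj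
  rw [hrange] at this
  rw [this, Module.finrank_fin_fun]

end


lemma mem_range_algebraMap_of_pow_card {F E : Type*} [Field F] [Fintype F] [Field E] [Fintype E]
    [Algebra F E] (q : ℕ) (hq2 : 2 ≤ q) (hF : Fintype.card F = q) (x : E) (hx : x ^ q = x) :
    x ∈ Set.range (algebraMap F E) := by
  classical
  set pol : E[X] := X ^ q - X with hpol
  have hpol0 : pol ≠ 0 := by
    intro h
    have hc : pol.coeff q = 1 := by
      rw [hpol, Polynomial.coeff_sub, Polynomial.coeff_X_pow, if_pos rfl,
        Polynomial.coeff_X, if_neg (by omega)]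
      simp
    rw [h] at hc
    simp at hc
  have hdeg : pol.natDegree ≤ q := by
    rw [hpol]
    refine le_trans (Polynomial.natDegree_sub_le _ _) ?_
    simp [Polynomial.natDegree_X_pow]
    omega
  set img := Finset.univ.image (algebraMap F E) with himgdef
  have himg : img ⊆ pol.roots.toFinset := by
    intro y hy
    rw [himgdef, Finset.mem_image] at hy
    obtain ⟨b, _, rfl⟩ := hy
    rw [Multiset.mem_toFinset, Polynomial.mem_roots hpol0]
    have hb : b ^ q = b := by rw [← hF]; exact FiniteField.pow_card b
    simp [Polynomial.IsRoot, hpol, ← map_pow, hb]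
  have hcard1 : img.card = q := by
    rw [himgdef, Finset.card_image_of_injective _ (algebraMap F E).injective,
      Finset.card_univ, hF]
  have hcard2 : pol.roots.toFinset.card ≤ q :=
    le_trans (Multiset.toFinset_card_le _) (le_trans (Polynomial.card_roots' pol) hdeg)
  have heq : img = pol.roots.toFinset :=
    Finset.eq_of_subset_of_card_le himg (by omega)
  have hxmem : x ∈ pol.roots.toFinset := by
    rw [Multiset.mem_toFinset, Polynomial.mem_roots hpol0]
    simp [Polynomial.IsRoot, hpol, hx]
  rw [← heq, himgdef, Finset.mem_image] at hxmem
  obtain ⟨b, _, hb⟩ := hxmem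
  exact ⟨b, hb⟩

lemma exists_g {F E : Type*} [Field F] [Fintype F] [Field E] [Fintype E] [Algebra F E]
    (q n : ℕ) (hq2 : 2 ≤ q) (hF : Fintype.card F = q)
    (hchar : ∀ x y : E, (x + y) ^ q = x ^ q + y ^ q)
    (hcop : Nat.Coprime q n) (hn : 0 < n)
    (β : E) (hβ : orderOf β = n)
    (S : Finset ℕ) (hS : ∀ k ∈ S, k < n) (hclosed : ∀ k ∈ S, (q * k) % n ∈ S) :
    ∃ g : F[X], g.Monic ∧ g.natDegree = S.card ∧
      g.map (algebraMap F E) = ∏ k ∈ S, (X - C (β ^ k)) := by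
  classical
  set ψ : E →+* E :=
    { toFun := fun x => x ^ q
      map_one' := one_pow q
      map_mul' := fun x y => mul_pow x y q
      map_zero' := zero_pow (by omega)
      map_add' := hchar } with hψ
  set gE : E[X] := ∏ k ∈ S, (X - C (β ^ k)) with hgE
  have hmonicE : gE.Monic := monic_prod_of_monic _ _ (fun k _ => monic_X_sub_C _)
  have hdegE : gE.natDegree = S.card := by
    rw [hgE, Polynomial.natDegree_prod _ _ (fun k _ => X_sub_C_ne_zero _)]
    rw [Finset.sum_congr rfl (fun k _ => Polynomial.natDegree_X_sub_C (β ^ k))]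
    simp
  have hψβ : ∀ k, ψ (β ^ k) = β ^ ((q * k) % n) := by
    intro k
    show (β ^ k) ^ q = β ^ ((q * k) % n)
    rw [← pow_mul, mul_comm k q, ← hβ]
    exact (pow_mod_orderOf β (q * k)).symm
  have hinjσ : ∀ x ∈ S, ∀ y ∈ S, (q * x) % n = (q * y) % n → x = y := by
    intro x hx y hy hxy
    have h1 : q * x ≡ q * y [MOD n] := by
      unfold Nat.ModEq
      exact hxy
    have h2 : x ≡ y [MOD n] := (Nat.ModEq.cancel_left_of_coprime hcop.symm h1)
    unfold Nat.ModEq at h2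
    rw [Nat.mod_eq_of_lt (hS x hx), Nat.mod_eq_of_lt (hS y hy)] at h2
    exact h2
  have himage : Finset.image (fun k => (q * k) % n) S = S := by
    apply Finset.eq_of_subset_of_card_le
    · intro x hx
      rw [Finset.mem_image] at hx
      obtain ⟨k, hk, rfl⟩ := hx
      exact hclosed k hk
    · rw [Finset.card_image_of_injOn hinjσ]
  have hmapψ : gE.map ψ = gE := by
    rw [hgE, Polynomial.map_prod]
    have h1 : ∀ k ∈ S, (X - C (β ^ k)).map ψ = X - C (β ^ ((q * k) % n)) := by
      intro k _
      rw [Polynomial.map_sub, Polynomial.map_X, Polynomial.map_C, hψβ]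
    rw [Finset.prod_congr rfl h1]
    conv_rhs => rw [← himage, Finset.prod_image hinjσ]
  have hlift : gE ∈ Polynomial.lifts (algebraMap F E) := by
    rw [Polynomial.lifts_iff_coeff_lifts]
    intro i
    apply mem_range_algebraMap_of_pow_card q hq2 hF
    have := congrArg (fun p => Polynomial.coeff p i) hmapψ
    have h' : ψ (gE.coeff i) = gE.coeff i := by simpa [Polynomial.coeff_map] using this
    exact h'
  obtain ⟨g, hmap, hdeg, hmonic⟩ := Polynomial.lifts_and_degree_eq_and_monic hlift hmonicE
  refine ⟨g, hmonic, ?_, hmap⟩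
  rw [← hdegE]
  exact Polynomial.natDegree_eq_of_degree_eq hdeg


lemma geom_sum_pow {E : Type*} [Field E] (n : ℕ) (hn : 0 < n) (β : E) (hβ : orderOf β = n)
    (e : ℕ) : ∑ k ∈ Finset.range n, (β ^ e) ^ k = if n ∣ e then (n : E) else 0 := by
  split
  · next h =>
    have hx : β ^ e = 1 := by
      rw [← orderOf_dvd_iff_pow_eq_one, hβ]
      exact h
    simp [hx]
  · next h =>
    have hx : β ^ e ≠ 1 := by
      intro h1
      rw [← orderOf_dvd_iff_pow_eq_one, hβ] at h1
      exact h h1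
    have h1 : (∑ k ∈ Finset.range n, (β ^ e) ^ k) * (β ^ e - 1) = (β ^ e) ^ n - 1 :=
      geom_sum_mul (β ^ e) n
    have h2 : (β ^ e) ^ n = 1 := by
      rw [← pow_mul, mul_comm, pow_mul, ← hβ, pow_orderOf_eq_one, one_pow]
    rw [h2, sub_self] at h1
    rcases mul_eq_zero.mp h1 with h' | h'
    · exact h'
    · exact absurd (by linear_combination h' : β ^ e = 1) hx

lemma innerSumLemma {E : Type*} [Field E] (n : ℕ) (hn : 0 < n) (β : E) (hβ : orderOf β = n)
    (j l : ℕ) (hj : j < n) (hl : l < n) :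
    ∑ k ∈ Finset.range n, β ^ (k * j) * β ^ ((n - k) * l) = if j = l then (n : E) else 0 := by
  have hterm : ∀ k, k ≤ n → β ^ (k * j) * β ^ ((n - k) * l) = (β ^ (j + (n - l))) ^ k := by
    intro k hk
    have hexp : k * j + (n - k) * l + k * n = k * (j + (n - l)) + n * l := by
      have e1 : (n - k) * l = n * l - k * l := by rw [Nat.sub_mul]
      have e2 : k * (j + (n - l)) = k * j + (k * n - k * l) := by
        rw [Nat.mul_add, Nat.mul_sub]
      have e3 : k * l ≤ k * n := Nat.mul_le_mul_left k (le_of_lt hl)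
      have e4 : k * l ≤ n * l := Nat.mul_le_mul_right l hk
      omega
    have hβn : β ^ (k * n) = 1 := by
      rw [mul_comm, pow_mul, ← hβ, pow_orderOf_eq_one, one_pow]
    have hβnl : β ^ (n * l) = 1 := by
      rw [pow_mul, ← hβ, pow_orderOf_eq_one, one_pow]
    have h1 : β ^ (k * j) * β ^ ((n - k) * l) * β ^ (k * n) =
        β ^ (k * (j + (n - l))) * β ^ (n * l) := by
      rw [← pow_add, ← pow_add, ← pow_add, hexp]
    rw [hβn, mul_one, hβnl, mul_one] at h1
    rw [h1, mul_comm k, pow_mul]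
  rw [Finset.sum_congr rfl (fun k hk => hterm k (le_of_lt (Finset.mem_range.mp hk))),
    geom_sum_pow n hn β hβ]
  have hcond : (n ∣ j + (n - l)) ↔ j = l := by
    constructor
    · rintro ⟨t, ht⟩
      rcases Nat.eq_zero_or_pos t with rfl | ht0
      · omega
      · have ht1 : t = 1 := by
          by_contra h'
          have h2 : 2 ≤ t := by omega
          have h3 : n * 2 ≤ n * t := Nat.mul_le_mul_left n h2
          omega
        subst ht1
        omega
    · rintro rfl
      exact ⟨1, by omega⟩
  simp only [hcond]

lemma dot_eq_zero {F E : Type*} [Field F] [Field E] [Algebra F E] (n : ℕ) (hn : 0 < n)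
    (β : E) (hβ : orderOf β = n) (hne : (n : E) ≠ 0) (u v : Fin n → F)
    (h : ∀ k ∈ Finset.range n,
      (∑ j : Fin n, algebraMap F E (u j) * β ^ (k * (j : ℕ))) = 0 ∨
      (∑ j : Fin n, algebraMap F E (v j) * β ^ ((n - k) * (j : ℕ))) = 0) :
    ∑ j : Fin n, u j * v j = 0 := by
  have hA : ∑ k ∈ Finset.range n,
      (∑ j : Fin n, algebraMap F E (u j) * β ^ (k * (j : ℕ))) *
      (∑ l : Fin n, algebraMap F E (v l) * β ^ ((n - k) * (l : ℕ))) = 0 := by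
    apply Finset.sum_eq_zero
    intro k hk
    rcases h k hk with h' | h'
    · rw [h', zero_mul]
    · rw [h', mul_zero]
  have hB : ∀ k ∈ Finset.range n,
      (∑ j : Fin n, algebraMap F E (u j) * β ^ (k * (j : ℕ))) *
      (∑ l : Fin n, algebraMap F E (v l) * β ^ ((n - k) * (l : ℕ))) =
      ∑ j : Fin n, ∑ l : Fin n, (algebraMap F E (u j) * algebraMap F E (v l)) *
        (β ^ (k * (j : ℕ)) * β ^ ((n - k) * (l : ℕ))) := by
    intro k _
    rw [Finset.sum_mul_sum]
    apply Finset.sum_congr rfl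
    intro j _
    apply Finset.sum_congr rfl
    intro l _
    ring
  rw [Finset.sum_congr rfl hB, Finset.sum_comm] at hA
  have hC : ∀ j : Fin n,
      (∑ k ∈ Finset.range n, ∑ l : Fin n, (algebraMap F E (u j) * algebraMap F E (v l)) *
        (β ^ (k * (j : ℕ)) * β ^ ((n - k) * (l : ℕ)))) =
      algebraMap F E (u j) * algebraMap F E (v j) * (n : E) := by
    intro j
    rw [Finset.sum_comm]
    have hD : ∀ l : Fin n,
        (∑ k ∈ Finset.range n, (algebraMap F E (u j) * algebraMap F E (v l)) *
          (β ^ (k * (j : ℕ)) * β ^ ((n - k) * (l : ℕ)))) =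
        (algebraMap F E (u j) * algebraMap F E (v l)) *
          (if (j : ℕ) = (l : ℕ) then (n : E) else 0) := by
      intro l
      rw [← Finset.mul_sum, innerSumLemma n hn β hβ (j : ℕ) (l : ℕ) j.isLt l.isLt]
    rw [Finset.sum_congr rfl (fun l _ => hD l)]
    rw [Finset.sum_eq_single j]
    · simp
    · intro b _ hb
      rw [if_neg (fun he => hb (Fin.val_injective he).symm), mul_zero]
    · intro hj
      exact absurd (Finset.mem_univ j) hj
  rw [Finset.sum_congr rfl (fun j _ => hC j)] at hA
  have hE : (algebraMap F E) (∑ j : Fin n, u j * v j) * (n : E) = 0 := by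
    rw [map_sum, Finset.sum_mul]
    rw [← hA]
    apply Finset.sum_congr rfl
    intro j _
    rw [map_mul]
  rcases mul_eq_zero.mp hE with h' | h'
  · exact (map_eq_zero_iff _ (algebraMap F E).injective).mp h'
  · exact absurd h' hne



noncomputable def dotForm (F : Type*) [Field F] (n : ℕ) :
    (Fin n → F) →ₗ[F] (Fin n → F) →ₗ[F] F :=
  LinearMap.mk₂ F (fun u v => ∑ k, u k * v k)
    (fun u u' v => by rw [← Finset.sum_add_distrib]; apply Finset.sum_congr rfl; intros; simp [add_mul])
    (fun r u v => by rw [Finset.smul_sum]; apply Finset.sum_congr rfl; intros; simp [mul_assoc])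
    (fun u v v' => by rw [← Finset.sum_add_distrib]; apply Finset.sum_congr rfl; intros; simp [mul_add])
    (fun r u v => by rw [Finset.smul_sum]; apply Finset.sum_congr rfl; intros; simp; ring)

lemma dotForm_injective (F : Type*) [Field F] (n : ℕ) :
    Function.Injective (dotForm F n) := by
  rw [← LinearMap.ker_eq_bot, LinearMap.ker_eq_bot']
  intro u hu
  funext k
  have := congrArg (fun f => f (Pi.single k (1:F))) hu
  simp only [dotForm, LinearMap.mk₂_apply, LinearMap.zero_apply] at this
  rw [Finset.sum_eq_single k] at this
  · simpa using this
  · intro b _ hb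
    simp [Pi.single_apply, hb]
  · intro hk
    exact absurd (Finset.mem_univ k) hk

lemma dual_finrank {F : Type*} [Field F] {n : ℕ} (C : Submodule F (Fin n → F)) :
    ∃ D : Submodule F (Fin n → F), (↑D : Set (Fin n → F)) = dualSet (↑C : Set (Fin n → F)) ∧
      Module.finrank F D + Module.finrank F C = n := by
  classical
  set Θ : (Fin n → F) →ₗ[F] (C →ₗ[F] F) := (dotForm F n).compl₂ C.subtype with hΘ
  refine ⟨LinearMap.ker Θ, ?_, ?_⟩
  · ext u
    simp only [SetLike.mem_coe, LinearMap.mem_ker, dualSet, Set.mem_setOf_eq]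
    constructor
    · intro h v hv
      have := congrArg (fun f => f ⟨v, hv⟩) h
      simpa [hΘ, dotForm] using this
    · intro h
      apply LinearMap.ext
      rintro ⟨v, hv⟩
      simpa [hΘ, dotForm] using h v hv
  · have hsurj : Function.Surjective Θ := by
      intro f
      obtain ⟨g, hg⟩ := LinearMap.exists_extend f
      have hBsurj : Function.Surjective (dotForm F n) := by
        rw [← LinearMap.range_eq_top]
        apply Submodule.eq_top_of_finrank_eq
        rw [LinearMap.finrank_range_of_inj (dotForm_injective F n)]
        exact (Subspace.dual_finrank_eq).symm
      obtain ⟨u, hu⟩ := hBsurj g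
      refine ⟨u, ?_⟩
      rw [hΘ]
      apply LinearMap.ext
      intro c
      show (dotForm F n) u (C.subtype c) = f c
      rw [hu, ← hg]
      rfl
    have hrk := LinearMap.finrank_range_add_finrank_ker Θ
    rw [LinearMap.range_eq_top.mpr hsurj] at hrk
    have h1 : Module.finrank F (⊤ : Submodule F (C →ₗ[F] F)) = Module.finrank F C := by
      rw [finrank_top]
      exact Subspace.dual_finrank_eq
    rw [h1, Module.finrank_fin_fun] at hrk
    omega

end AuxLemmas

theorem stmt19 (s q m n : ℕ) (hs : 1 ≤ s) (hq : q = 2 ^ s)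
    (hm : 2 ≤ m) (hmeven : Even m) (hn : n = q ^ m - 1)
    (F E : Type*) [Field F] [Fintype F] [DecidableEq F] [Field E] [Fintype E] [Algebra F E]
    (hF : Fintype.card F = q) (hE : Fintype.card E = q ^ m)
    (β : E) (hβ : orderOf β = n) :
    (cyclicCode F E n β (Tset q m 1) : Set (Fin n → F)) ∩
        dualSet (cyclicCode F E n β (Tset q m 1) : Set (Fin n → F)) = {0} ∧
      Module.finrank F (cyclicCode F E n β (Tset q m 1)) = (n - 1) / 2 := by
  classical
  have hq2 : 2 ≤ q := by
    rw [hq]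
    calc 2 = 2 ^ 1 := (pow_one 2).symm
      _ ≤ 2 ^ s := Nat.pow_le_pow_right (by norm_num) hs
  have h2q : 2 ∣ q := by rw [hq]; exact dvd_pow_self 2 (by omega)
  have h2qm : 2 ∣ q ^ m := dvd_trans h2q (dvd_pow_self q (by omega))
  have hqm4 : 4 ≤ q ^ m := by
    calc 4 = 2 ^ 2 := rfl
      _ ≤ q ^ 2 := Nat.pow_le_pow_left hq2 2
      _ ≤ q ^ m := Nat.pow_le_pow_right (by omega) hm
  have hn0 : 0 < n := by omega
  have hn1 : n + 1 = q ^ m := by omega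
  have hnodd : n % 2 = 1 := by omega
  have hcop : Nat.Coprime q n := by
    rw [hq]
    apply Nat.Coprime.pow_left
    rw [Nat.coprime_two_left]
    exact Nat.odd_iff.mpr hnodd
  haveI : CharP E (ringChar E) := ringChar.charP E
  have hp2 : ringChar E = 2 := by
    obtain ⟨k, hk, hcard⟩ := FiniteField.card E (ringChar E)
    have hcard2 : ringChar E ^ (k : ℕ) = 2 ^ (s * m) := by
      rw [← hcard, hE, hq, ← pow_mul]
    have hdvd : ringChar E ∣ 2 ^ (s * m) := by
      rw [← hcard2]
      exact dvd_pow_self _ (by positivity)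
    exact (Nat.prime_dvd_prime_iff_eq hk Nat.prime_two).mp (hk.dvd_of_dvd_pow hdvd)
  haveI hCE : CharP E 2 := hp2 ▸ ringChar.charP E
  haveI : Fact (Nat.Prime 2) := ⟨Nat.prime_two⟩
  have hchar : ∀ x y : E, (x + y) ^ q = x ^ q + y ^ q := by
    intro x y
    rw [hq]
    exact add_pow_char_pow x y 2 s
  have hnE : (n : E) ≠ 0 := by
    have hc : ((q ^ m : ℕ) : E) = 0 := by rw [← hE]; exact FiniteField.cast_card_eq_zero E
    rw [← hn1] at hc
    push_cast at hc
    intro h0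
    rw [h0, zero_add] at hc
    exact one_ne_zero hc
  have hmq_even : m * (q - 1) % 2 = 0 := by
    obtain ⟨t, ht⟩ := hmeven
    have : m * (q - 1) = 2 * (t * (q - 1)) := by rw [ht]; ring
    omega
  have hwn : qWeight q n % 2 = 0 := by
    have h1 : qWeight q (q ^ m - 1 - 0) = m * (q - 1) - qWeight q 0 :=
      qWeight_compl q hq2 m 0 (by positivity)
    rw [Nat.sub_zero, qWeight_zero, Nat.sub_zero, ← hn] at h1
    have h3 : qWeight q n ≤ m * (q - 1) := by rw [h1]
    omega
  set S1 : Finset ℕ := (Finset.range n).filter (fun i => qWeight q i % 2 = 1) with hS1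
  set S0 : Finset ℕ := (Finset.range n).filter (fun i => ¬ (qWeight q i % 2 = 1)) with hS0
  have hS1sub : ∀ k ∈ S1, k < n := fun k hk => Finset.mem_range.mp (Finset.mem_filter.mp hk).1
  have hS0sub : ∀ k ∈ S0, k < n := fun k hk => Finset.mem_range.mp (Finset.mem_filter.mp hk).1
  have hTS1 : Tset q m 1 = ↑S1 := by
    ext i
    simp only [Tset, Set.mem_setOf_eq, hS1, Finset.coe_filter, Finset.mem_range]
    constructor
    · rintro ⟨h1, h2, h3⟩
      exact ⟨by omega, h3⟩
    · rintro ⟨h1, h2⟩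
      refine ⟨?_, by omega, h2⟩
      by_contra h
      have hi : i = 0 := by omega
      rw [hi, qWeight_zero] at h2
      omega
  have hcl1 : ∀ k ∈ S1, (q * k) % n ∈ S1 := by
    intro k hk
    obtain ⟨hkr, hkw⟩ := Finset.mem_filter.mp hk
    rw [Finset.mem_range] at hkr
    have hk1 : 1 ≤ k := by
      by_contra h
      have hi : k = 0 := by omega
      rw [hi, qWeight_zero] at hkw
      omega
    obtain ⟨hw, h1, h2⟩ := rotate_lemma q m n hq2 (by omega) hn k hk1 hkr
    exact Finset.mem_filter.mpr ⟨Finset.mem_range.mpr h2, by omega⟩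
  have hcl0 : ∀ k ∈ S0, (q * k) % n ∈ S0 := by
    intro k hk
    obtain ⟨hkr, hkw⟩ := Finset.mem_filter.mp hk
    rw [Finset.mem_range] at hkr
    rcases Nat.eq_zero_or_pos k with rfl | hk1
    · simpa using hk
    obtain ⟨hw, h1, h2⟩ := rotate_lemma q m n hq2 (by omega) hn k hk1 hkr
    exact Finset.mem_filter.mpr ⟨Finset.mem_range.mpr h2, by omega⟩
  have hcard1 : S1.card = (n + 1) / 2 := by
    have hall : ((Finset.range (q ^ m)).filter (fun i => qWeight q i % 2 = 1)).card = q ^ m / 2 :=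
      card_odd_weight q hq2 h2q (q ^ m) h2qm
    have hsplit : (Finset.range (q ^ m)).filter (fun i => qWeight q i % 2 = 1) = S1 := by
      rw [hS1, ← hn1, Finset.range_add_one, Finset.filter_insert, if_neg (by omega)]
    rw [hsplit] at hall
    omega
  have hcard0 : S0.card = n - S1.card := by
    have hfc := Finset.card_filter_add_card_filter_not (s := Finset.range n)
      (p := fun i => qWeight q i % 2 = 1)
    rw [Finset.card_range] at hfc
    rw [hS0, hS1]
    omega
  have hcard1le : S1.card ≤ n := by rw [hcard1]; omega
  obtain ⟨g1, hg1m, hg1d, hg1⟩ := exists_g q n hq2 hF hchar hcop hn0 β hβ S1 hS1sub hcl1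
  obtain ⟨g0, hg0m, hg0d, hg0⟩ := exists_g q n hq2 hF hchar hcop hn0 β hβ S0 hS0sub hcl0
  have hrankC : Module.finrank F (cyclicCode F E n β (Tset q m 1)) = (n - 1) / 2 := by
    rw [hTS1, cyclicCode_finrank n hn0 β hβ S1 hS1sub g1 hg1m hg1d hcard1le hg1, hcard1]
    omega
  have hrankD0 : Module.finrank F (cyclicCode F E n β (↑S0 : Set ℕ)) = (n + 1) / 2 := by
    rw [cyclicCode_finrank n hn0 β hβ S0 hS0sub g0 hg0m hg0d (by omega) hg0, hcard0, hcard1]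
    omega
  refine ⟨?_, hrankC⟩
  have hwtle : ∀ k, k < n → qWeight q k ≤ m * (q - 1) := fun k hk =>
    qWeight_le q hq2 m k (by omega)
  have hnk : ∀ k, 1 ≤ k → k < n →
      qWeight q (n - k) % 2 = qWeight q k % 2 ∧ 1 ≤ n - k ∧ n - k < n := by
    intro k h1 h2
    have hc := qWeight_compl q hq2 m k (by omega)
    rw [show q ^ m - 1 - k = n - k by omega] at hc
    have h3 := hwtle k h2
    exact ⟨by omega, by omega, by omega⟩
  have hev : ∀ (c : Fin n → F) (k : ℕ),
      ((polyOf c).map (algebraMap F E)).eval (β ^ k) =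
      ∑ j : Fin n, algebraMap F E (c j) * β ^ (k * (j : ℕ)) := by
    intro c k
    rw [polyOf_eval]
    exact Finset.sum_congr rfl fun j _ => by rw [← pow_mul]
  have hsub : ∀ u, u ∈ cyclicCode F E n β (↑S0 : Set ℕ) →
      u ∈ dualSet ((cyclicCode F E n β (Tset q m 1) : Submodule F (Fin n → F)) :
        Set (Fin n → F)) := by
    intro u hu
    intro v hv
    apply dot_eq_zero n hn0 β hβ hnE u v
    intro k hkr
    rw [Finset.mem_range] at hkr
    by_cases hk : qWeight q k % 2 = 1
    · right
      have hk1 : 1 ≤ k := by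
        by_contra h
        have hi : k = 0 := by omega
        rw [hi, qWeight_zero] at hk
        omega
      obtain ⟨hpw, ha, hb⟩ := hnk k hk1 hkr
      have hmem : (n - k) ∈ Tset q m 1 := ⟨ha, by omega, by omega⟩
      exact (SetLike.mem_coe.mp hv) (n - k) hmem
    · left
      exact hu k (Finset.mem_coe.mpr (Finset.mem_filter.mpr ⟨Finset.mem_range.mpr hkr, hk⟩))
  obtain ⟨D, hDset, hDrank⟩ := dual_finrank (cyclicCode F E n β (Tset q m 1))
  have hD0D : cyclicCode F E n β (↑S0 : Set ℕ) ≤ D := by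
    intro u hu
    have h1 := hsub u hu
    rw [← hDset] at h1
    exact h1
  have heqD : cyclicCode F E n β (↑S0 : Set ℕ) = D := by
    apply Submodule.eq_of_le_of_finrank_le hD0D
    rw [hrankD0]
    omega
  ext x
  simp only [Set.mem_inter_iff, Set.mem_singleton_iff]
  constructor
  · rintro ⟨hxC, hxD⟩
    rw [← hDset, ← heqD] at hxD
    have hx0 : x ∈ cyclicCode F E n β (↑S0 : Set ℕ) := hxD
    have hxC' : x ∈ cyclicCode F E n β (Tset q m 1) := hxC
    have hroots : ∀ k ∈ Finset.range n, ((polyOf x).map (algebraMap F E)).eval (β ^ k) = 0 := by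
      intro k hkr
      rw [Finset.mem_range] at hkr
      rw [hev]
      by_cases hk : qWeight q k % 2 = 1
      · have hk1 : 1 ≤ k := by
          by_contra h
          have hi : k = 0 := by omega
          rw [hi, qWeight_zero] at hk
          omega
        exact hxC' k ⟨hk1, by omega, hk⟩
      · exact hx0 k (Finset.mem_coe.mpr (Finset.mem_filter.mpr ⟨Finset.mem_range.mpr hkr, hk⟩))
    have hdvd := dvd_of_roots (Finset.range n) (fun k => β ^ k)
      (fun a ha b hb hab => pow_inj_of_orderOf hn0 β hβ
        (Finset.mem_range.mp (Finset.mem_coe.mp ha)) (Finset.mem_range.mp (Finset.mem_coe.mp hb))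
        hab)
      ((polyOf x).map (algebraMap F E)) hroots
    have hP0 : (polyOf x).map (algebraMap F E) = 0 := by
      by_contra hP
      have hnd : (∏ k ∈ Finset.range n, (Polynomial.X - Polynomial.C (β ^ k))).natDegree = n := by
        rw [Polynomial.natDegree_prod _ _ (fun k _ => Polynomial.X_sub_C_ne_zero _)]
        rw [Finset.sum_congr rfl (fun k _ => Polynomial.natDegree_X_sub_C (β ^ k))]
        simp
      have hle := Polynomial.natDegree_le_of_dvd hdvd hP
      rw [hnd] at hle
      have hlt : ((polyOf x).map (algebraMap F E)).natDegree < n :=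
        lt_of_le_of_lt Polynomial.natDegree_map_le (polyOf_natDegree_lt hn0 x)
      omega
    rw [Polynomial.map_eq_zero_iff (algebraMap F E).injective] at hP0
    exact (polyOf_eq_zero_iff x).mp hP0
  · rintro rfl
    constructor
    · exact Submodule.zero_mem _
    · intro v hv
      simp
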